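/- An n×n real matrix K is a DPP kernel if and only if for every nonzero x ∈ ℝⁿ there exists an index i with x_i ≠ 0, x_i (Kx)_i ≥ 0, and |(Kx)_i| ≤ |x_i|. -/

import Mathlib

open Matrix BigOperators Finset

/-- The indicator vector of the subset `S`. -/
def indVec {n : ℕ} (S : Finset (Fin n)) : Fin n → ℝ := fun i => if i ∈ S then 1 else 0

/-- `K` is a DPP kernel: each value `P(X = Sᶜ) = det(D(1_{Sᶜ})(I-K) + D(1_S)K)` is
nonnegative, i.e. `K` defines a determinantal point process. -/
def IsDPPKernel {n : ℕ} (K : Matrix (Fin n) (Fin n) ℝ) : Prop :=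
  ∀ S : Finset (Fin n),
    0 ≤ (Matrix.diagonal (indVec Sᶜ) * (1 - K) + Matrix.diagonal (indVec S) * K).det

namespace DPPaux
variable {n : ℕ}

/-- construction of the mixing coefficient -/
lemma exists_mu (a b : ℝ) (h : a = 0 ∨ a * b < 0 ∨ (0 ≤ a * b ∧ |a| < |b|)) :
    ∃ μ : ℝ, 0 < μ ∧ μ < 1 ∧ μ * a + (1 - 2 * μ) * b = 0 := by
  rcases h with h | h | ⟨h1, h2⟩
  · exact ⟨1/2, by norm_num, by norm_num, by rw [h]; ring⟩
  · -- a*b < 0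
    have hb : b ≠ 0 := fun e => by simp [e] at h
    have hbd : 0 < b * (2 * b - a) := by nlinarith [sq_nonneg b]
    have hdd : b * (2 * b - a) < (2 * b - a) ^ 2 := by nlinarith [sq_nonneg a, sq_nonneg b]
    have hd : (2 * b - a) ≠ 0 := by
      intro e; rw [e] at hbd; simp at hbd
    refine ⟨b / (2 * b - a), ?_, ?_, ?_⟩
    · have : b / (2 * b - a) = (b * (2 * b - a)) / ((2 * b - a) ^ 2) := by
        field_simp
      rw [this]; positivity
    · have heq : b / (2 * b - a) = (b * (2 * b - a)) / ((2 * b - a) ^ 2) := by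
        field_simp
      rw [heq]
      exact (div_lt_one (by positivity)).mpr hdd
    · linear_combination (-b) * mul_inv_cancel₀ hd
  · -- 0 ≤ a*b, |a| < |b|
    have hb : b ≠ 0 := by
      intro e; rw [e] at h2; simp at h2; exact absurd h2 (not_lt.mpr (abs_nonneg a))
    have hab : a * b ≤ |a| * |b| := by rw [← abs_mul]; exact le_abs_self _
    have hb0 : 0 < |b| := abs_pos.mpr hb
    have hsq : |a| * |b| < b ^ 2 := by
      have : |a| * |b| < |b| * |b| := mul_lt_mul_of_pos_right h2 hb0
      nlinarith [abs_mul_abs_self b]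
    have hbd : 0 < b * (2 * b - a) := by nlinarith
    have hdd : b * (2 * b - a) < (2 * b - a) ^ 2 := by
      nlinarith [sq_abs a, sq_abs b, mul_pos (sub_pos.mpr h2) (by nlinarith [abs_nonneg a] : (0:ℝ) < 2 * |b| - |a|)]
    have hd : (2 * b - a) ≠ 0 := by
      intro e; rw [e] at hbd; simp at hbd
    refine ⟨b / (2 * b - a), ?_, ?_, ?_⟩
    · have : b / (2 * b - a) = (b * (2 * b - a)) / ((2 * b - a) ^ 2) := by
        field_simp
      rw [this]; positivity
    · have heq : b / (2 * b - a) = (b * (2 * b - a)) / ((2 * b - a) ^ 2) := by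
        field_simp
      rw [heq]
      exact (div_lt_one (by positivity)).mpr hdd
    · linear_combination (-b) * mul_inv_cancel₀ hd

/-- The row-mixture matrix: row `i` is `μ i • (1-K)_i + (1-μ i) • K_i`. -/
def mixM (K : Matrix (Fin n) (Fin n) ℝ) (μ : Fin n → ℝ) : Matrix (Fin n) (Fin n) ℝ :=
  Matrix.of fun i j => μ i * (1 - K) i j + (1 - μ i) * K i j

lemma mixM_indVec_compl (K : Matrix (Fin n) (Fin n) ℝ) (S : Finset (Fin n)) :
    mixM K (indVec Sᶜ) =
      Matrix.diagonal (indVec Sᶜ) * (1 - K) + Matrix.diagonal (indVec S) * K := by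
  ext i j
  by_cases h : i ∈ S <;>
    simp [mixM, indVec, Matrix.add_apply, Matrix.diagonal_mul, h]

lemma det_mixM (K : Matrix (Fin n) (Fin n) ℝ) (μ : Fin n → ℝ) :
    (mixM K μ).det = ∑ T : Finset (Fin n),
      (∏ i, if i ∈ T then μ i else 1 - μ i) * (mixM K (indVec T)).det := by
  classical
  have h1 : mixM K μ =
      ((fun i => μ i • (1 - K) i) + fun i => (1 - μ i) • K i : Fin n → Fin n → ℝ) := by
    funext i j
    simp [mixM, smul_eq_mul]
  have h2 := Matrix.detRowAlternating.toMultilinearMap.map_add_univ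
      (fun i => μ i • (1 - K) i) (fun i => (1 - μ i) • K i)
  have h3 : ∀ T : Finset (Fin n),
      (T.piecewise (fun i => μ i • (1 - K) i) (fun i => (1 - μ i) • K i)) =
        fun i => (if i ∈ T then μ i else 1 - μ i) • (mixM K (indVec T)) i := by
    intro T
    funext i j
    by_cases h : i ∈ T <;> simp [Finset.piecewise, mixM, indVec, h, smul_eq_mul]
  calc (mixM K μ).det
      = Matrix.detRowAlternating
          ((fun i => μ i • (1 - K) i) + fun i => (1 - μ i) • K i : Fin n → Fin n → ℝ) := by
        rw [← h1]; rfl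
    _ = ∑ T : Finset (Fin n), Matrix.detRowAlternating
          (T.piecewise (fun i => μ i • (1 - K) i) (fun i => (1 - μ i) • K i)) := h2
    _ = ∑ T : Finset (Fin n),
          (∏ i, if i ∈ T then μ i else 1 - μ i) * (mixM K (indVec T)).det := by
        refine Finset.sum_congr rfl fun T _ => ?_
        rw [h3 T]
        have := Matrix.detRowAlternating.toMultilinearMap.map_smul_univ
          (fun i => if i ∈ T then μ i else 1 - μ i) (fun i => (mixM K (indVec T)) i)
        simp [smul_eq_mul] at this ⊢; exact this

lemma sum_det_mixM (K : Matrix (Fin n) (Fin n) ℝ) :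
    ∑ T : Finset (Fin n), (mixM K (indVec T)).det = 1 := by
  classical
  have h1 : (1 : Matrix (Fin n) (Fin n) ℝ) =
      ((fun i => (1 - K) i) + fun i => K i : Fin n → Fin n → ℝ) := by
    funext i j; simp
  have h2 := Matrix.detRowAlternating.toMultilinearMap.map_add_univ
      (fun i => (1 - K) i) (fun i => K i)
  have h3 : ∀ T : Finset (Fin n),
      (T.piecewise (fun i => (1 - K) i) (fun i => K i)) = mixM K (indVec T) := by
    intro T
    funext i j
    by_cases h : i ∈ T <;> simp [Finset.piecewise, mixM, indVec, h]
  have : (1 : ℝ) = ∑ T : Finset (Fin n), (mixM K (indVec T)).det := by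
    calc (1 : ℝ) = (1 : Matrix (Fin n) (Fin n) ℝ).det := (Matrix.det_one).symm
      _ = Matrix.detRowAlternating ((fun i => (1 - K) i) + fun i => K i : Fin n → Fin n → ℝ) := by
          rw [← h1]; rfl
      _ = ∑ T : Finset (Fin n), Matrix.detRowAlternating
            (T.piecewise (fun i => (1 - K) i) (fun i => K i)) := h2
      _ = ∑ T : Finset (Fin n), (mixM K (indVec T)).det := by
          refine Finset.sum_congr rfl fun T _ => ?_
          rw [h3 T]; rfl
  linarith

lemma mixM_mulVec (K : Matrix (Fin n) (Fin n) ℝ) (μ x : Fin n → ℝ) (i : Fin n) :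
    (mixM K μ).mulVec x i = μ i * x i + (1 - 2 * μ i) * K.mulVec x i := by
  classical
  simp only [mixM, Matrix.mulVec, dotProduct, Matrix.of_apply, Matrix.sub_apply,
    Matrix.one_apply]
  calc ∑ j, (μ i * ((if i = j then 1 else 0) - K i j) + (1 - μ i) * K i j) * x j
      = ∑ j, (μ i * ((if i = j then 1 else 0) * x j) + (1 - 2 * μ i) * (K i j * x j)) :=
        Finset.sum_congr rfl fun j _ => by ring
    _ = μ i * ∑ j, (if i = j then 1 else 0) * x j + (1 - 2 * μ i) * ∑ j, K i j * x j := by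
        rw [Finset.sum_add_distrib, Finset.mul_sum, Finset.mul_sum]
    _ = μ i * x i + (1 - 2 * μ i) * ∑ j, K i j * x j := by
        simp

/-- All mixed determinants are nonnegative when rewritten through `mixM`. -/
lemma dpp_mixM {K : Matrix (Fin n) (Fin n) ℝ} (hK : IsDPPKernel K) (T : Finset (Fin n)) :
    0 ≤ (mixM K (indVec T)).det := by
  have := hK Tᶜ
  rwa [← mixM_indVec_compl, compl_compl] at this

theorem dpp_to_pointwise {K : Matrix (Fin n) (Fin n) ℝ} (hK : IsDPPKernel K)
    (x : Fin n → ℝ) (hx : x ≠ 0) :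
    ∃ i : Fin n, x i ≠ 0 ∧ 0 ≤ x i * K.mulVec x i ∧ |K.mulVec x i| ≤ |x i| := by
  classical
  by_contra hcon
  push_neg at hcon
  set y := K.mulVec x with hy
  have hdis : ∀ i, x i = 0 ∨ x i * y i < 0 ∨ (0 ≤ x i * y i ∧ |x i| < |y i|) := by
    intro i
    by_cases h0 : x i = 0
    · exact Or.inl h0
    rcases lt_or_ge (x i * y i) 0 with h | h
    · exact Or.inr (Or.inl h)
    · exact Or.inr (Or.inr ⟨h, hcon i h0 h⟩)
  choose μ h1 h2 h3 using fun i => exists_mu (x i) (y i) (hdis i)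
  have hzero : (mixM K μ).mulVec x = 0 := by
    funext i
    rw [mixM_mulVec, ← hy]
    exact h3 i
  have hdet0 : (mixM K μ).det = 0 :=
    Matrix.exists_mulVec_eq_zero_iff.mp ⟨x, hx, hzero⟩
  rw [det_mixM] at hdet0
  have hwpos : ∀ T : Finset (Fin n), 0 < ∏ i, (if i ∈ T then μ i else 1 - μ i) := by
    intro T
    refine Finset.prod_pos fun i _ => ?_
    by_cases h : i ∈ T <;> simp [h]
    · exact h1 i
    · linarith [h2 i]
  have hterm : ∀ T ∈ (Finset.univ : Finset (Finset (Fin n))),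
      0 ≤ (∏ i, if i ∈ T then μ i else 1 - μ i) * (mixM K (indVec T)).det :=
    fun T _ => mul_nonneg (hwpos T).le (dpp_mixM hK T)
  have hall := (Finset.sum_eq_zero_iff_of_nonneg hterm).mp hdet0
  have hzero' : ∀ T : Finset (Fin n), (mixM K (indVec T)).det = 0 := by
    intro T
    have h := hall T (Finset.mem_univ T)
    rcases mul_eq_zero.mp h with h' | h'
    · exact absurd h' (ne_of_gt (hwpos T))
    · exact h'
  have hsum := sum_det_mixM K
  rw [Finset.sum_congr rfl fun T _ => hzero' T] at hsum
  simp at hsum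

theorem pointwise_to_dpp {K : Matrix (Fin n) (Fin n) ℝ}
    (hp : ∀ x : Fin n → ℝ, x ≠ 0 → ∃ i : Fin n,
      x i ≠ 0 ∧ 0 ≤ x i * K.mulVec x i ∧ |K.mulVec x i| ≤ |x i|) :
    IsDPPKernel K := by
  classical
  intro S
  set Kt : ℝ → Matrix (Fin n) (Fin n) ℝ :=
    fun t => t • K + ((1 - t)/2) • (1 : Matrix (Fin n) (Fin n) ℝ) with hKt
  set f : ℝ → ℝ := fun t => (mixM (Kt t) (indVec Sᶜ)).det with hf
  have hcont : Continuous f := by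
    apply Continuous.matrix_det
    apply continuous_matrix
    intro i j
    simp only [mixM, Matrix.of_apply, Matrix.sub_apply, hKt, Matrix.add_apply,
      Matrix.smul_apply, smul_eq_mul]
    fun_prop
  have hK1 : Kt 1 = K := by
    simp [hKt]
  have hf0 : 0 < f 0 := by
    have : mixM (Kt 0) (indVec Sᶜ) = (2⁻¹ : ℝ) • (1 : Matrix (Fin n) (Fin n) ℝ) := by
      ext i j
      simp only [mixM, Matrix.of_apply, Matrix.sub_apply, hKt, Matrix.add_apply,
        Matrix.smul_apply, smul_eq_mul]
      ring
    rw [hf]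
    simp only [this, Matrix.det_smul, Matrix.det_one, smul_eq_mul, mul_one]
    positivity
  have hne : ∀ t ∈ Set.Ico (0:ℝ) 1, f t ≠ 0 := by
    rintro t ⟨ht0, ht1⟩ hdet
    obtain ⟨x, hx, hxz⟩ := Matrix.exists_mulVec_eq_zero_iff.mpr hdet
    obtain ⟨i, hxi, hp1, hp2⟩ := hp x hx
    set y := K.mulVec x with hy
    have hyx : x i * y i ≤ x i ^ 2 := by
      calc x i * y i ≤ |x i * y i| := le_abs_self _
        _ = |x i| * |y i| := abs_mul _ _
        _ ≤ |x i| * |x i| := mul_le_mul_of_nonneg_left hp2 (abs_nonneg _)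
        _ = x i ^ 2 := by rw [abs_mul_abs_self]; ring
    have hz : ∀ j, (Kt t).mulVec x j = t * y j + (1 - t)/2 * x j := by
      intro j
      rw [hKt]
      simp [Matrix.add_mulVec, Matrix.smul_mulVec, Matrix.one_mulVec, ← hy]
    have hkey : x i * (Kt t).mulVec x i = t * (x i * y i) + (1 - t)/2 * x i ^ 2 := by
      rw [hz i]; ring
    have hx2 : 0 < x i ^ 2 := by positivity
    have hpos : 0 < x i * (Kt t).mulVec x i := by
      rw [hkey]
      nlinarith [mul_nonneg ht0 hp1]
    have hlt : x i * (Kt t).mulVec x i < x i ^ 2 := by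
      rw [hkey]
      nlinarith
    have hmv := congrFun hxz i
    rw [mixM_mulVec] at hmv
    simp only [Pi.zero_apply] at hmv
    by_cases hiS : i ∈ S
    · have : indVec Sᶜ i = 0 := by simp [indVec, hiS]
      rw [this] at hmv
      simp at hmv
      rw [hmv] at hpos
      simp at hpos
    · have : indVec Sᶜ i = 1 := by simp [indVec, hiS]
      rw [this] at hmv
      have : (Kt t).mulVec x i = x i := by linarith
      rw [this] at hlt
      nlinarith
  have hf1 : 0 ≤ f 1 := by
    by_contra h
    push_neg at h
    have hmem : (0:ℝ) ∈ Set.Icc (f 1) (f 0) := ⟨h.le, hf0.le⟩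
    obtain ⟨c, hc, hfc⟩ :=
      intermediate_value_Icc' (by norm_num : (0:ℝ) ≤ 1) hcont.continuousOn hmem
    have hc1 : c ≠ 1 := by
      intro e
      rw [e] at hfc
      exact absurd hfc.symm (ne_of_gt (neg_pos.mpr h) ∘ fun q => by linarith)
    exact hne c ⟨hc.1, lt_of_le_of_ne hc.2 hc1⟩ hfc
  have hf1' : 0 ≤ (mixM (Kt 1) (indVec Sᶜ)).det := hf1
  rw [hK1, mixM_indVec_compl] at hf1'
  exact hf1'

end DPPaux

theorem isDPPKernel_iff_pointwise {n : ℕ} (K : Matrix (Fin n) (Fin n) ℝ) :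
    IsDPPKernel K ↔
      ∀ x : Fin n → ℝ, x ≠ 0 → ∃ i : Fin n,
        x i ≠ 0 ∧ 0 ≤ x i * K.mulVec x i ∧ |K.mulVec x i| ≤ |x i| := by
  constructor
  · exact fun hK x hx => DPPaux.dpp_to_pointwise hK x hx
  · exact fun hp => DPPaux.pointwise_to_dpp hp
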